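/- Let a = a₁ + i a₂ with |a| < 1, |a−1| ≥ 1, a₂ > 0, and 0 ≤ b < 1. Suppose |a−ξ| ≥ 1 and |a+ξ| ≥ 1 where ξ = (1+i√3)/2 (the case a ∈ Ω_II). Define F(a,b) = [κ(a), 1/2] × [−b, 1] minus the corners SW(−1/2, 1−b) = [κ(a), −1/2) × [−b, 1−b) and SE(κ(−ā), 0) = (κ(−ā), 1/2] × [−b, 0), where κ(w) = Re(w)/2 − (Im(w)/|w|)√(1 − |w|²/4). Then the area of F(a,b) equals 1 − a₁b. -/

import Mathlib

set_option maxHeartbeats 1000000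
open MeasureTheory

noncomputable def kappa (w : ℂ) : ℝ :=
  w.re / 2 - (w.im / ‖w‖) * Real.sqrt (1 - (‖w‖)^2 / 4)

noncomputable def Fab (a : ℂ) (b : ℝ) : Set (ℝ × ℝ) :=
  (Set.Icc (kappa a) (1/2) ×ˢ Set.Icc (-b) 1) \
    ((Set.Ico (kappa a) (-(1/2)) ×ˢ Set.Ico (-b) (1 - b)) ∪
     (Set.Ioc (kappa (-(starRingEnd ℂ) a)) (1/2) ×ˢ Set.Ico (-b) 0))

private lemma keybounds (x y r s : ℝ) (hy : 0 < y) (hr0 : 0 < r) (hr1 : r < 1)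
    (hr2 : r^2 = x^2+y^2)
    (hs0 : 0 ≤ s) (hs_sq : s^2 = 1 - r^2/4)
    (hi : 2*x ≤ r^2) (hii : -(r^2+x) ≤ Real.sqrt 3 * y)
    (hiii : Real.sqrt 3 * y ≤ r^2 - x) :
    x/2 - y/r*s ≤ -(1/2) ∧ -(1/2) ≤ -x/2 - y/r*s ∧ -x/2 - y/r*s ≤ 1/2 := by
  have hs3 : Real.sqrt 3 ^ 2 = 3 := Real.sq_sqrt (by norm_num)
  have hs3' : 0 ≤ Real.sqrt 3 := Real.sqrt_nonneg 3
  have hrr : r^2 < 1 := by nlinarith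
  have hx1 : -1 < x := by nlinarith
  have hx2 : x < 1 := by nlinarith
  set t : ℝ := y / r * s with htdef
  have ht0 : 0 ≤ t := by positivity
  have ht2 : t^2 * (4 * r^2) = y^2 * (4 - r^2) := by
    rw [htdef, div_mul_eq_mul_div, div_pow]
    rw [div_mul_eq_mul_div, div_eq_iff (by positivity)]
    linear_combination 4*r^2*y^2*hs_sq
  have hA : (1 + x)^2 * r^2 ≤ y^2 * (4 - r^2) := by
    rcases le_or_gt (x + r^2) 0 with h | h
    · have hsq : (r^2 + x)^2 ≤ 3 * y^2 := by
        nlinarith [mul_nonneg (by linarith : (0:ℝ) ≤ Real.sqrt 3*y - (r^2+x))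
          (by linarith : (0:ℝ) ≤ Real.sqrt 3*y + (r^2+x)), hs3]
      nlinarith [hsq, hr2]
    · nlinarith [mul_nonneg (sub_nonneg.mpr hi) (le_of_lt h), hr2, hrr, hr0]
  have htA : (1 + x)/2 ≤ t := by
    have h4 : (1 + x)^2 * r^2 ≤ t^2 * (4*r^2) := by rw [ht2]; exact hA
    have h5 : (1+x)^2 ≤ 4*t^2 :=
      le_of_mul_le_mul_right (by nlinarith [h4]) (pow_pos hr0 2)
    have h6 : (0:ℝ) < 1 + x + 2*t := by linarith
    nlinarith [h5, h6]
  have hB : y^2 * (4 - r^2) ≤ (1 - x)^2 * r^2 := by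
    have hsq : 3 * y^2 ≤ (r^2 - x)^2 := by
      nlinarith [mul_nonneg (sub_nonneg.mpr hiii)
        (by nlinarith : (0:ℝ) ≤ r^2 - x + Real.sqrt 3*y), hs3]
    nlinarith [hsq, hr2]
  have htB : t ≤ (1 - x)/2 := by
    have h4 : t^2 * (4*r^2) ≤ (1-x)^2 * r^2 := by rw [ht2]; exact hB
    have h5 : 4*t^2 ≤ (1-x)^2 :=
      le_of_mul_le_mul_right (by nlinarith [h4]) (pow_pos hr0 2)
    have h6 : (0:ℝ) < 1 - x + 2*t := by linarith
    nlinarith [h5, h6]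
  exact ⟨by linarith, by linarith, by linarith⟩

private lemma areacalc (c d b : ℝ) (hb0 : 0 ≤ b)
    (hc : c ≤ -(1/2)) (hd1 : -(1/2) ≤ d) (hd2 : d ≤ 1/2) :
    volume ((Set.Icc c (1/2) ×ˢ Set.Icc (-b) 1) \
      ((Set.Ico c (-(1/2)) ×ˢ Set.Ico (-b) (1 - b)) ∪
       (Set.Ioc d (1/2) ×ˢ Set.Ico (-b) 0)))
      = ENNReal.ofReal (1 - (c - d) * b) := by
  have hcd : c ≤ d := by linarith
  set R : Set (ℝ × ℝ) := Set.Icc c (1/2) ×ˢ Set.Icc (-b) 1 with hR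
  set S1 : Set (ℝ × ℝ) := Set.Ico c (-(1/2)) ×ˢ Set.Ico (-b) (1 - b) with hS1
  set S2 : Set (ℝ × ℝ) := Set.Ioc d (1/2) ×ˢ Set.Ico (-b) 0 with hS2
  have hsub : S1 ∪ S2 ⊆ R := by
    apply Set.union_subset
    · exact Set.prod_mono (fun z hz => ⟨hz.1, by linarith [hz.2]⟩)
        (fun z hz => ⟨hz.1, by linarith [hz.2]⟩)
    · exact Set.prod_mono (fun z hz => ⟨by linarith [hz.1], hz.2⟩)
        (fun z hz => ⟨hz.1, by linarith [hz.2]⟩)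
  have hdisj : Disjoint S1 S2 := by
    rw [Set.disjoint_left]
    rintro ⟨p, q⟩ h1 h2
    exact absurd h2.1.1 (by push_neg; linarith [h1.1.2])
  have hm1 : MeasurableSet S1 := (measurableSet_Ico).prod measurableSet_Ico
  have hm2 : MeasurableSet S2 := (measurableSet_Ioc).prod measurableSet_Ico
  have hvR : volume R = ENNReal.ofReal ((1/2 - c) * (1 + b)) := by
    rw [hR, Measure.volume_eq_prod, Measure.prod_prod, Real.volume_Icc, Real.volume_Icc,
      ← ENNReal.ofReal_mul (by linarith)]
    ring_nf
  have hvS1 : volume S1 = ENNReal.ofReal (-(1/2) - c) := by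
    rw [hS1, Measure.volume_eq_prod, Measure.prod_prod, Real.volume_Ico, Real.volume_Ico,
      ← ENNReal.ofReal_mul (by linarith)]
    ring_nf
  have hvS2 : volume S2 = ENNReal.ofReal ((1/2 - d) * b) := by
    rw [hS2, Measure.volume_eq_prod, Measure.prod_prod, Real.volume_Ioc, Real.volume_Ico,
      ← ENNReal.ofReal_mul (by linarith)]
    ring_nf
  have hvS : volume (S1 ∪ S2) = ENNReal.ofReal ((-(1/2) - c) + (1/2 - d) * b) := by
    rw [measure_union hdisj hm2, hvS1, hvS2,
      ← ENNReal.ofReal_add (by linarith) (by nlinarith)]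
  rw [measure_diff hsub ((hm1.union hm2).nullMeasurableSet)
      (by rw [hvS]; exact ENNReal.ofReal_ne_top),
    hvR, hvS, ← ENNReal.ofReal_sub _ (by nlinarith)]
  congr 1
  ring

theorem stmt_16 (a : ℂ) (ha : ‖a‖ < 1) (ha1 : 1 ≤ ‖a - 1‖)
    (him : 0 < a.im) (b : ℝ) (hb0 : 0 ≤ b) (hb1 : b < 1)
    (hxi1 : 1 ≤ ‖a - (1 + Complex.I * Real.sqrt 3) / 2‖)
    (hxi2 : 1 ≤ ‖a + (1 + Complex.I * Real.sqrt 3) / 2‖) :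
    volume (Fab a b) = ENNReal.ofReal (1 - a.re * b) := by
  have hr0 : 0 < ‖a‖ :=
    lt_of_lt_of_le him (le_trans (le_abs_self _) (Complex.abs_im_le_norm a))
  have hr2 : (‖a‖)^2 = a.re^2 + a.im^2 := by
    rw [Complex.sq_norm, Complex.normSq_apply]; ring
  have hs3 : Real.sqrt 3 ^ 2 = 3 := Real.sq_sqrt (by norm_num)
  have h1 : (1:ℝ) ≤ (a.re - 1)^2 + a.im^2 := by
    have h2 : (1:ℝ) ≤ ‖a - 1‖ ^ 2 := by
      nlinarith [norm_nonneg (a - 1)]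
    rw [Complex.sq_norm, Complex.normSq_apply] at h2
    simp [Complex.sub_re, Complex.sub_im] at h2
    nlinarith [h2]
  have hz : ((1 + Complex.I * (Real.sqrt 3:ℝ)) / 2 : ℂ)
      = (Complex.I * ((Real.sqrt 3 / 2 : ℝ):ℂ) + ((1/2 : ℝ):ℂ)) := by push_cast; ring
  have h2 : (1:ℝ) ≤ (a.re - 1/2)^2 + (a.im - Real.sqrt 3/2)^2 := by
    have h2 : (1:ℝ) ≤ ‖a - (1 + Complex.I * Real.sqrt 3) / 2‖ ^ 2 := by
      nlinarith [norm_nonneg (a - (1 + Complex.I * Real.sqrt 3) / 2)]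
    rw [Complex.sq_norm, Complex.normSq_apply, hz] at h2
    simp [Complex.sub_re, Complex.sub_im, Complex.add_re, Complex.add_im] at h2
    nlinarith [h2]
  have h3 : (1:ℝ) ≤ (a.re + 1/2)^2 + (a.im + Real.sqrt 3/2)^2 := by
    have h2 : (1:ℝ) ≤ ‖a + (1 + Complex.I * Real.sqrt 3) / 2‖ ^ 2 := by
      nlinarith [norm_nonneg (a + (1 + Complex.I * Real.sqrt 3) / 2)]
    rw [Complex.sq_norm, Complex.normSq_apply, hz] at h2
    simp [Complex.add_re, Complex.add_im] at h2
    nlinarith [h2]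
  obtain ⟨k1, k2, k3⟩ := keybounds a.re a.im (‖a‖)
      (Real.sqrt (1 - (‖a‖)^2/4)) him hr0 ha hr2
      (Real.sqrt_nonneg _)
      (Real.sq_sqrt (by nlinarith : (0:ℝ) ≤ 1 - (‖a‖)^2/4))
      (by nlinarith [h1, hr2])
      (by nlinarith [h3, hr2, hs3])
      (by nlinarith [h2, hr2, hs3])
  have hkap : kappa a = a.re/2 - a.im/(‖a‖) * Real.sqrt (1 - (‖a‖)^2/4) :=
    rfl
  have hkap2 : kappa (-(starRingEnd ℂ) a)
      = -a.re/2 - a.im/(‖a‖) * Real.sqrt (1 - (‖a‖)^2/4) := by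
    have e1 : (-(starRingEnd ℂ) a).re = -a.re := by simp
    have e2 : (-(starRingEnd ℂ) a).im = a.im := by simp
    have e3 : ‖-(starRingEnd ℂ) a‖ = ‖a‖ := by
      rw [norm_neg, Complex.norm_conj]
    rw [kappa, e1, e2, e3]
  have key := areacalc (kappa a) (kappa (-(starRingEnd ℂ) a)) b hb0
    (by rw [hkap]; linarith) (by rw [hkap2]; linarith) (by rw [hkap2]; linarith)
  rw [Fab, key]
  congr 2
  rw [hkap, hkap2]; ring
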